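/- The monoid S = ⟨x, y ; x² = y²⟩ (the monoid on two generators with the single relation x² = y²) is of I-type: there exists a bijection v : ℕ² → S with v(0,0) = 1 such that for all (a,b) ∈ ℕ², {v(a+1, b), v(a, b+1)} = {x·v(a,b), y·v(a,b)}. -/

import Mathlib

/-- The defining relation `x² = y²` on the free monoid on two generators. -/
def sqRel : FreeMonoid (Fin 2) → FreeMonoid (Fin 2) → Prop := fun a b =>
  a = FreeMonoid.of 0 * FreeMonoid.of 0 ∧ b = FreeMonoid.of 1 * FreeMonoid.of 1

/-- The monoid `⟨x, y ; x² = y²⟩`. -/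
abbrev SqMonoid : Type := (conGen sqRel).Quotient

/-- The generator `x` of `⟨x, y ; x² = y²⟩`. -/
def sqX : SqMonoid := (conGen sqRel).mk' (FreeMonoid.of 0)

/-- The generator `y` of `⟨x, y ; x² = y²⟩`. -/
def sqY : SqMonoid := (conGen sqRel).mk' (FreeMonoid.of 1)

/-! ### Auxiliary target monoid : `ℕ² ⋊ C₂` -/

/-- Carrier of the semidirect product `ℕ² ⋊ C₂` where `C₂` swaps coordinates. -/
def MyM : Type := (ℕ × ℕ) × Bool

/-- Constructor for `MyM`. -/
def MyM.mk (a b : ℕ) (s : Bool) : MyM := ((a, b), s)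

instance : Mul MyM :=
  ⟨fun p q => ((p.1.1 + (cond p.2 q.1.2 q.1.1), p.1.2 + (cond p.2 q.1.1 q.1.2)),
    xor p.2 q.2)⟩

instance : One MyM := ⟨((0, 0), false)⟩

lemma MyM.mk_mul (a b : ℕ) (s : Bool) (c d : ℕ) (t : Bool) :
    MyM.mk a b s * MyM.mk c d t
      = MyM.mk (a + cond s d c) (b + cond s c d) (xor s t) := rfl

lemma MyM.one_def : (1 : MyM) = MyM.mk 0 0 false := rfl

lemma MyM.mk_inj {a b c d : ℕ} {s t : Bool} (h : MyM.mk a b s = MyM.mk c d t) :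
    a = c ∧ b = d ∧ s = t := by
  unfold MyM.mk at h
  refine ⟨congrArg (fun p => p.1.1) h, congrArg (fun p => p.1.2) h,
    congrArg (fun p => p.2) h⟩

instance : Monoid MyM where
  mul_assoc p q r := by
    obtain ⟨⟨a, b⟩, s⟩ := p
    obtain ⟨⟨c, d⟩, t⟩ := q
    obtain ⟨⟨e, f⟩, u⟩ := r
    show MyM.mk a b s * MyM.mk c d t * MyM.mk e f u
      = MyM.mk a b s * (MyM.mk c d t * MyM.mk e f u)
    rw [MyM.mk_mul, MyM.mk_mul, MyM.mk_mul, MyM.mk_mul]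
    cases s <;> cases t <;> cases u <;>
      simp only [MyM.mk, cond_true, cond_false] <;>
      rw [Nat.add_assoc, Nat.add_assoc] <;> rfl
  one_mul p := by
    obtain ⟨⟨a, b⟩, s⟩ := p
    show MyM.mk 0 0 false * MyM.mk a b s = MyM.mk a b s
    rw [MyM.mk_mul]; simp
  mul_one p := by
    obtain ⟨⟨a, b⟩, s⟩ := p
    show MyM.mk a b s * MyM.mk 0 0 false = MyM.mk a b s
    rw [MyM.mk_mul]; cases s <;> simp

/-- The map on generators. -/
def genMap : Fin 2 → MyM := fun i => if i = 0 then MyM.mk 1 0 true else MyM.mk 0 1 true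

lemma ker_le : conGen sqRel ≤ Con.ker (FreeMonoid.lift genMap) := by
  apply Con.conGen_le.mpr
  rintro a b ⟨rfl, rfl⟩
  show (FreeMonoid.lift genMap) _ = (FreeMonoid.lift genMap) _
  rw [map_mul, map_mul, FreeMonoid.lift_eval_of, FreeMonoid.lift_eval_of]
  rfl

/-- The homomorphism `SqMonoid →* MyM`. -/
def Phi : SqMonoid →* MyM := (conGen sqRel).lift (FreeMonoid.lift genMap) ker_le

lemma Phi_X : Phi sqX = MyM.mk 1 0 true := by
  unfold Phi sqX
  rw [Con.lift_mk', FreeMonoid.lift_eval_of]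
  rfl

lemma Phi_Y : Phi sqY = MyM.mk 0 1 true := by
  unfold Phi sqY
  rw [Con.lift_mk', FreeMonoid.lift_eval_of]
  rfl

/-! ### The candidate bijection -/

/-- The relation `x² = y²` in `SqMonoid`. -/
lemma xx_eq_yy : sqX * sqX = sqY * sqY := by
  unfold sqX sqY
  rw [← map_mul, ← map_mul]
  exact (Con.eq _).mpr (ConGen.Rel.of _ _ ⟨rfl, rfl⟩)

/-- `T = x²` is the central element. -/
def Tc : SqMonoid := sqX * sqX

lemma Tc_eq_XX : Tc = sqX * sqX := rfl

lemma Tc_eq_YY : Tc = sqY * sqY := xx_eq_yy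

lemma commX_T : Commute sqX Tc := (Commute.refl sqX).mul_right (Commute.refl sqX)

lemma commY_T : Commute sqY Tc := by
  have h : Commute sqY (sqY * sqY) := (Commute.refl sqY).mul_right (Commute.refl sqY)
  rwa [← Tc_eq_YY] at h

lemma commX_Tpow (b : ℕ) : sqX * Tc ^ b = Tc ^ b * sqX := (commX_T.pow_right b).eq

lemma commY_Tpow (b : ℕ) : sqY * Tc ^ b = Tc ^ b * sqY := (commY_T.pow_right b).eq

/-- Alternating word of length `n` ending in `x`. -/
def altx : ℕ → SqMonoid
  | 0 => 1
  | n + 1 => (if Even n then sqX else sqY) * altx n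

/-- Alternating word of length `n` ending in `y`. -/
def alty : ℕ → SqMonoid
  | 0 => 1
  | n + 1 => (if Even n then sqY else sqX) * alty n

lemma altx_succ (n : ℕ) : altx (n + 1) = (if Even n then sqX else sqY) * altx n := rfl
lemma alty_succ (n : ℕ) : alty (n + 1) = (if Even n then sqY else sqX) * alty n := rfl

/-- The I-structure bijection. -/
def vfun : ℕ × ℕ → SqMonoid := fun p =>
  Tc ^ min p.1 p.2 * (if p.2 ≤ p.1 then altx (p.1 - p.2) else alty (p.2 - p.1))

lemma vfun_ge {a b : ℕ} (h : b ≤ a) : vfun (a, b) = Tc ^ b * altx (a - b) := by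
  unfold vfun
  simp only [min_eq_right h, if_pos h]

lemma vfun_lt {a b : ℕ} (h : a < b) : vfun (a, b) = Tc ^ a * alty (b - a) := by
  unfold vfun
  simp only [min_eq_left h.le, if_neg (by omega : ¬ b ≤ a)]

/-- The even case of the I-structure relation. -/
lemma pairE (a b : ℕ) (he : Even (a + b)) :
    vfun (a + 1, b) = sqX * vfun (a, b) ∧ vfun (a, b + 1) = sqY * vfun (a, b) := by
  rw [Nat.even_iff] at he
  rcases le_or_gt b a with h | h
  · have hd : Even (a - b) := by rw [Nat.even_iff]; omega
    constructor
    · rw [vfun_ge (by omega : b ≤ a + 1), vfun_ge h,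
        show a + 1 - b = (a - b) + 1 from by omega, altx_succ, if_pos hd,
        ← mul_assoc, ← mul_assoc, commX_Tpow]
    · rcases Nat.eq_or_lt_of_le h with heq | hlt
      · -- a = b
        rw [vfun_lt (by omega : a < b + 1), vfun_ge h, heq,
          show a - a = 0 from by omega, show a + 1 - a = 1 from by omega]
        show Tc ^ a * ((if Even 0 then sqY else sqX) * alty 0) = sqY * (Tc ^ a * altx 0)
        rw [if_pos Even.zero]
        show Tc ^ a * (sqY * 1) = sqY * (Tc ^ a * 1)
        rw [mul_one, mul_one, commY_Tpow]
      · -- b < a, a - b even positive so a - b ≥ 2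
        have h2 : 2 ≤ a - b := by rw [Nat.even_iff] at hd; omega
        rw [vfun_ge (by omega : b + 1 ≤ a), vfun_ge h,
          show a - b = (a - b - 1) + 1 from by omega, altx_succ,
          if_neg (by rw [Nat.even_iff] at hd ⊢; omega),
          show a - (b + 1) = a - b - 1 from by omega]
        rw [← mul_assoc, commY_Tpow, mul_assoc, ← mul_assoc sqY sqY, ← Tc_eq_YY,
          pow_succ, mul_assoc]
  · -- a < b, d = b - a even, hence ≥ 2
    have hd : Even (b - a) := by rw [Nat.even_iff]; omega
    have h2 : 2 ≤ b - a := by rw [Nat.even_iff] at hd; omega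
    constructor
    · -- X * alty d = T * alty (d-1)
      rw [vfun_lt h, vfun_lt (by omega : a + 1 < b),
        show b - a = (b - a - 1) + 1 from by omega, alty_succ,
        if_neg (by rw [Nat.even_iff] at hd ⊢; omega),
        show b - (a + 1) = b - a - 1 from by omega]
      rw [← mul_assoc, commX_Tpow, mul_assoc, ← mul_assoc sqX sqX, ← Tc_eq_XX,
        pow_succ, mul_assoc]
    · -- Y * alty d = alty (d + 1), d even
      rw [vfun_lt (by omega : a < b + 1), vfun_lt h,
        show b + 1 - a = (b - a) + 1 from by omega, alty_succ, if_pos hd,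
        ← mul_assoc, ← mul_assoc, commY_Tpow]

/-- The odd case of the I-structure relation. -/
lemma pairO (a b : ℕ) (ho : ¬ Even (a + b)) :
    vfun (a + 1, b) = sqY * vfun (a, b) ∧ vfun (a, b + 1) = sqX * vfun (a, b) := by
  rw [Nat.even_iff] at ho
  rcases le_or_gt b a with h | h
  · have hd : ¬ Even (a - b) := by rw [Nat.even_iff]; omega
    have h1 : 1 ≤ a - b := by rw [Nat.even_iff] at hd; omega
    constructor
    · -- Y * altx d = altx (d + 1), d odd
      rw [vfun_ge (by omega : b ≤ a + 1), vfun_ge h,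
        show a + 1 - b = (a - b) + 1 from by omega, altx_succ, if_neg hd,
        ← mul_assoc, ← mul_assoc, commY_Tpow]
    · -- X * altx d = T * altx (d - 1), d odd ≥ 1
      rw [vfun_ge (by omega : b + 1 ≤ a), vfun_ge h,
        show a - b = (a - b - 1) + 1 from by omega, altx_succ,
        if_pos (by rw [Nat.even_iff] at hd ⊢; omega),
        show a - (b + 1) = a - b - 1 from by omega]
      rw [← mul_assoc, commX_Tpow, mul_assoc, ← mul_assoc sqX sqX, ← Tc_eq_XX,
        pow_succ, mul_assoc]
  · have hd : ¬ Even (b - a) := by rw [Nat.even_iff]; omega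
    constructor
    · -- Y * alty d = T * alty (d - 1), d odd ≥ 1
      rcases Nat.lt_or_ge (a + 1) b with h2 | h2
      · rw [vfun_lt h, vfun_lt h2,
          show b - a = (b - a - 1) + 1 from by omega, alty_succ,
          if_pos (by rw [Nat.even_iff] at hd ⊢; omega),
          show b - (a + 1) = b - a - 1 from by omega]
        rw [← mul_assoc, commY_Tpow, mul_assoc, ← mul_assoc sqY sqY, ← Tc_eq_YY,
          pow_succ, mul_assoc]
      · -- b = a + 1
        have hb : b = a + 1 := by omega
        subst hb
        rw [vfun_ge (le_refl (a + 1)), vfun_lt (by omega : a < a + 1),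
          show a + 1 - (a + 1) = 0 from by omega, show a + 1 - a = 1 from by omega]
        show Tc ^ (a + 1) * altx 0
          = sqY * (Tc ^ a * ((if Even 0 then sqY else sqX) * alty 0))
        rw [if_pos Even.zero]
        show Tc ^ (a + 1) * 1 = sqY * (Tc ^ a * (sqY * 1))
        rw [mul_one, mul_one, ← mul_assoc, commY_Tpow, mul_assoc, ← Tc_eq_YY, pow_succ]
    · -- X * alty d = alty (d + 1), d odd
      rw [vfun_lt (by omega : a < b + 1), vfun_lt h,
        show b + 1 - a = (b - a) + 1 from by omega, alty_succ, if_neg hd,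
        ← mul_assoc, ← mul_assoc, commX_Tpow]

/-! ### Computing `Phi ∘ vfun` -/

lemma Phi_T : Phi Tc = MyM.mk 1 1 false := by
  rw [Tc_eq_XX, map_mul, Phi_X, MyM.mk_mul]
  rfl

lemma Phi_Tpow (m : ℕ) : Phi (Tc ^ m) = MyM.mk m m false := by
  induction m with
  | zero => rw [pow_zero, map_one]; rfl
  | succ n ih =>
    rw [pow_succ, map_mul, ih, Phi_T, MyM.mk_mul]
    rfl

lemma Phi_altx (n : ℕ) :
    Phi (altx n) = if Even n then MyM.mk 0 n false else MyM.mk n 0 true := by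
  induction n with
  | zero =>
    rw [if_pos Even.zero, show altx 0 = 1 from rfl, map_one]; rfl
  | succ n ih =>
    rw [altx_succ, map_mul, ih]
    by_cases h : Even n
    · rw [if_pos h, if_pos h, if_neg (by rw [Nat.even_iff] at h ⊢; omega),
        Phi_X, MyM.mk_mul]
      show MyM.mk (1 + n) 0 true = MyM.mk (n + 1) 0 true
      rw [Nat.add_comm]
    · rw [if_neg h, if_neg h, if_pos (by rw [Nat.even_iff] at h ⊢; omega),
        Phi_Y, MyM.mk_mul]
      show MyM.mk 0 (1 + n) false = MyM.mk 0 (n + 1) false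
      rw [Nat.add_comm]

lemma Phi_alty (n : ℕ) :
    Phi (alty n) = if Even n then MyM.mk n 0 false else MyM.mk 0 n true := by
  induction n with
  | zero =>
    rw [if_pos Even.zero, show alty 0 = 1 from rfl, map_one]; rfl
  | succ n ih =>
    rw [alty_succ, map_mul, ih]
    by_cases h : Even n
    · rw [if_pos h, if_pos h, if_neg (by rw [Nat.even_iff] at h ⊢; omega),
        Phi_Y, MyM.mk_mul]
      show MyM.mk 0 (1 + n) true = MyM.mk 0 (n + 1) true
      rw [Nat.add_comm]
    · rw [if_neg h, if_neg h, if_pos (by rw [Nat.even_iff] at h ⊢; omega),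
        Phi_X, MyM.mk_mul]
      show MyM.mk (1 + n) 0 false = MyM.mk (n + 1) 0 false
      rw [Nat.add_comm]

lemma Phi_vfun (a b : ℕ) :
    Phi (vfun (a, b)) =
      if Even (a + b) then MyM.mk b a false else MyM.mk a b true := by
  rcases le_or_gt b a with h | h
  · rw [vfun_ge h, map_mul, Phi_Tpow, Phi_altx]
    by_cases hd : Even (a - b)
    · rw [if_pos hd, if_pos (by rw [Nat.even_iff] at hd ⊢; omega), MyM.mk_mul]
      show MyM.mk (b + 0) (b + (a - b)) false = MyM.mk b a false
      rw [Nat.add_zero, show b + (a - b) = a from by omega]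
    · rw [if_neg hd, if_neg (by rw [Nat.even_iff] at hd ⊢; omega), MyM.mk_mul]
      show MyM.mk (b + (a - b)) (b + 0) true = MyM.mk a b true
      rw [Nat.add_zero, show b + (a - b) = a from by omega]
  · rw [vfun_lt h, map_mul, Phi_Tpow, Phi_alty]
    by_cases hd : Even (b - a)
    · rw [if_pos hd, if_pos (by rw [Nat.even_iff] at hd ⊢; omega), MyM.mk_mul]
      show MyM.mk (a + (b - a)) (a + 0) false = MyM.mk b a false
      rw [Nat.add_zero, show a + (b - a) = b from by omega]
    · rw [if_neg hd, if_neg (by rw [Nat.even_iff] at hd ⊢; omega), MyM.mk_mul]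
      show MyM.mk (a + 0) (a + (b - a)) true = MyM.mk a b true
      rw [Nat.add_zero, show a + (b - a) = b from by omega]

lemma vfun_injective : Function.Injective vfun := by
  rintro ⟨a, b⟩ ⟨c, d⟩ h
  have h2 := congrArg Phi h
  rw [Phi_vfun, Phi_vfun] at h2
  by_cases h1 : Even (a + b) <;> by_cases h3 : Even (c + d)
  · rw [if_pos h1, if_pos h3] at h2
    obtain ⟨e1, e2, -⟩ := MyM.mk_inj h2
    simp [e1, e2]
  · rw [if_pos h1, if_neg h3] at h2
    obtain ⟨-, -, e3⟩ := MyM.mk_inj h2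
    exact absurd e3 (by simp)
  · rw [if_neg h1, if_pos h3] at h2
    obtain ⟨-, -, e3⟩ := MyM.mk_inj h2
    exact absurd e3 (by simp)
  · rw [if_neg h1, if_neg h3] at h2
    obtain ⟨e1, e2, -⟩ := MyM.mk_inj h2
    simp [e1, e2]

lemma vfun_zero : vfun (0, 0) = 1 := by
  rw [vfun_ge (le_refl 0)]
  simp [altx]

lemma vfun_pair (a b : ℕ) :
    ({vfun (a + 1, b), vfun (a, b + 1)} : Set SqMonoid) =
      ({sqX * vfun (a, b), sqY * vfun (a, b)} : Set SqMonoid) := by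
  by_cases h : Even (a + b)
  · obtain ⟨e1, e2⟩ := pairE a b h
    rw [e1, e2]
  · obtain ⟨e1, e2⟩ := pairO a b h
    rw [e1, e2, Set.pair_comm]

lemma vfun_surjective : Function.Surjective vfun := by
  intro s
  obtain ⟨w, rfl⟩ := Con.mk'_surjective s
  induction w using FreeMonoid.recOn with
  | one => exact ⟨(0, 0), by rw [vfun_zero, map_one]⟩
  | of_mul x xs ih =>
    obtain ⟨⟨a, b⟩, hab⟩ := ih
    rw [map_mul]
    have hx : (conGen sqRel).mk' (FreeMonoid.of x) = sqX ∨
        (conGen sqRel).mk' (FreeMonoid.of x) = sqY := by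
      fin_cases x
      · left; rfl
      · right; rfl
    have key := vfun_pair a b
    rcases hx with hx | hx <;> rw [hx, ← hab]
    · have hm : sqX * vfun (a, b) ∈ ({vfun (a + 1, b), vfun (a, b + 1)} : Set SqMonoid) := by
        rw [key]; exact Set.mem_insert _ _
      rcases hm with h' | h'
      · exact ⟨(a + 1, b), h'.symm⟩
      · exact ⟨(a, b + 1), h'.symm⟩
    · have hm : sqY * vfun (a, b) ∈ ({vfun (a + 1, b), vfun (a, b + 1)} : Set SqMonoid) := by
        rw [key]; exact Set.mem_insert_of_mem _ rfl
      rcases hm with h' | h'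
      · exact ⟨(a + 1, b), h'.symm⟩
      · exact ⟨(a, b + 1), h'.symm⟩

theorem sqMonoid_is_I_type :
    ∃ v : ℕ × ℕ → SqMonoid, Function.Bijective v ∧ v (0, 0) = 1 ∧
      ∀ a b : ℕ,
        ({v (a + 1, b), v (a, b + 1)} : Set SqMonoid) =
          ({sqX * v (a, b), sqY * v (a, b)} : Set SqMonoid) := by
  exact ⟨vfun, ⟨vfun_injective, vfun_surjective⟩, vfun_zero, vfun_pair⟩
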